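/- Let A be a unital C*-algebra and let a, b be elements of the closed unit ball of A with a positive. Set z = 1 − a(1 + b)a. Then z z* ≤ 1 − a² + a b b* a, and consequently z z* ≤ 1 (in the order of self-adjoint elements of A given by positivity of the difference). -/

import Mathlib

/-- In a unital C*-algebra `A`, if `a, b` are in the closed unit ball
with `a` positive and `z = 1 - a(1 + b)a`, then `z z* ≤ 1 - a² + a b b* a` and
consequently `z z* ≤ 1`. -/
theorem mul_star_le_of_pos_unitBall
    {A : Type*} [NormedRing A] [StarRing A] [CStarRing A] [CompleteSpace A]
    [NormedAlgebra ℂ A] [StarModule ℂ A] [PartialOrder A] [StarOrderedRing A]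
    (a b : A) (ha : 0 ≤ a) (hna : ‖a‖ ≤ 1) (hnb : ‖b‖ ≤ 1) :
    (1 - a * (1 + b) * a) * star (1 - a * (1 + b) * a) ≤ 1 - a ^ 2 + a * b * star b * a ∧
      (1 - a * (1 + b) * a) * star (1 - a * (1 + b) * a) ≤ 1 := by
  letI : CStarAlgebra A := ⟨⟩
  have ha' : star a = a := (IsSelfAdjoint.of_nonneg ha).star_eq
  -- a ^ 2 ≤ 1
  have hsq : a ^ 2 ≤ 1 := by
    have h0 : (0 : A) ≤ a ^ 2 := by simpa [sq, ha'] using star_mul_self_nonneg a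
    rw [← CStarAlgebra.norm_le_one_iff_of_nonneg _ h0]
    calc ‖a ^ 2‖ = ‖star a * a‖ := by rw [ha', sq]
    _ = ‖a‖ * ‖a‖ := CStarRing.norm_star_mul_self
    _ ≤ 1 := by nlinarith [norm_nonneg a]
  -- b * star b ≤ 1
  have hbb : b * star b ≤ 1 := by
    rw [← CStarAlgebra.norm_le_one_iff_of_nonneg _ (mul_star_self_nonneg b)]
    calc ‖b * star b‖ = ‖b‖ * ‖b‖ := CStarRing.norm_self_mul_star
    _ ≤ 1 := by nlinarith [norm_nonneg b]
  have hstarz : star (1 - a * (1 + b) * a) = 1 - a * (1 + star b) * a := by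
    simp [star_sub, star_mul, ha', mul_assoc]
  have key : (1 - a * (1 + b) * a) * star (1 - a * (1 + b) * a)
      ≤ 1 - a ^ 2 + a * b * star b * a := by
    rw [← sub_nonneg, hstarz]
    have hc : (0 : A) ≤ star ((1 + star b) * a) * (1 - a ^ 2) * ((1 + star b) * a) :=
      star_left_conjugate_nonneg (by rwa [sub_nonneg]) _
    have heq : star ((1 + star b) * a) * (1 - a ^ 2) * ((1 + star b) * a)
        = 1 - a ^ 2 + a * b * star b * a
          - (1 - a * (1 + b) * a) * (1 - a * (1 + star b) * a) := by
      simp only [star_mul, star_add, star_one, star_star, ha']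
      noncomm_ring
    rwa [heq] at hc
  refine ⟨key, key.trans ?_⟩
  have : a * (b * star b) * a ≤ a * 1 * a := by
    simpa [ha'] using star_left_conjugate_le_conjugate hbb a
  calc 1 - a ^ 2 + a * b * star b * a ≤ 1 - a ^ 2 + a ^ 2 := by
        refine add_le_add_right ?_ _ |>.trans_eq rfl
        simpa [sq, mul_assoc] using this
  _ = 1 := sub_add_cancel 1 (a ^ 2)
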